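/- For every real number t ≠ 0, the series ∑_{n=1}^∞ 1/(n² + t²) converges and equals −1/(2t²) + (π/(2t))·coth(πt), where coth(x) = (e^{2x} + 1)/(e^{2x} − 1). -/

import Mathlib

open Real MeasureTheory Set intervalIntegral

noncomputable section

lemma exp_npiI_sq (n : ℤ) : Complex.exp ((n:ℂ)*π*Complex.I) * Complex.exp ((n:ℂ)*π*Complex.I) = 1 := by
  rw [← Complex.exp_add]
  rw [show (n:ℂ)*π*Complex.I + (n:ℂ)*π*Complex.I = n * (2*π*Complex.I) by ring]
  exact Complex.exp_int_mul_two_pi_mul_I n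

lemma key_int (c : ℂ) (hc : c.re ≠ 0) :
    ∫ x in (-π:ℝ)..(-π + 2*π), Complex.exp (c * x) =
      (Complex.exp (c * π) - Complex.exp (-(c * π))) / c := by
  have hc0 : c ≠ 0 := fun h => hc (by simp [h])
  rw [integral_exp_mul_complex hc0]
  have h1 : ((-π + 2*π : ℝ) : ℂ) = (π:ℝ) := by push_cast; ring
  have h2 : c * ((-π:ℝ):ℂ) = -(c * π) := by push_cast; ring
  rw [h1, h2]

def cf (t : ℝ) (n : ℤ) : ℂ :=
  Complex.exp ((n:ℂ)*π*Complex.I) * ((Real.sinh (π*t) * t / (π * (t^2 + (n:ℝ)^2)) : ℝ) : ℂ)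

lemma coeff_eq (t : ℝ) (ht : t ≠ 0) (n : ℤ) :
    fourierCoeffOn (by linarith [pi_pos] : (-π:ℝ) < -π + 2*π)
      (fun x => (Real.cosh (t*x) : ℂ)) n = cf t n := by
  rw [fourierCoeffOn_eq_integral]
  simp only [fourier_coe_apply, smul_eq_mul]
  have hpi := Real.pi_pos
  have hcong : ∀ x ∈ Set.uIcc (-π:ℝ) (-π + 2*π),
      Complex.exp (2*π*Complex.I*(-n:ℤ)*x/((-π + 2*π - -π : ℝ):ℂ)) * (Real.cosh (t*x):ℂ)
      = (Complex.exp (((t:ℂ) - n*Complex.I)*x) + Complex.exp ((-(t:ℂ) - n*Complex.I)*x))/2 := by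
    intro x _
    have hd : (2*(π:ℂ)*Complex.I*((-n:ℤ):ℂ)*x/((-π + 2*π - -π : ℝ):ℂ)) = -(n:ℂ)*Complex.I*x := by
      have h1 : ((-π + 2*π - -π : ℝ):ℂ) = 2*(π:ℂ) := by push_cast; ring
      rw [h1]
      have h2 : (2*(π:ℂ)) ≠ 0 := by
        simpa using Complex.ofReal_ne_zero.mpr Real.pi_ne_zero
      push_cast
      field_simp
    rw [hd, Complex.ofReal_cosh, Complex.ofReal_mul, Complex.cosh]
    rw [show ((t:ℂ) - n*Complex.I)*x = -(n:ℂ)*Complex.I*x + (t:ℂ)*x by ring,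
        show (-(t:ℂ) - n*Complex.I)*x = -(n:ℂ)*Complex.I*x + -((t:ℂ)*x) by ring,
        Complex.exp_add, Complex.exp_add]
    ring
  rw [intervalIntegral.integral_congr hcong]
  have hc1 : ((t:ℂ) - n*Complex.I) ≠ 0 := by
    intro h
    apply ht
    simpa using congrArg Complex.re h
  have hc2 : (-(t:ℂ) - n*Complex.I) ≠ 0 := by
    intro h
    apply ht
    have := congrArg Complex.re h
    simp at this
    simpa using this
  have i1 : IntervalIntegrable (fun x:ℝ => Complex.exp (((t:ℂ)-n*Complex.I)*x))
      volume (-π) (-π+2*π) := by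
    apply Continuous.intervalIntegrable
    fun_prop
  have i2 : IntervalIntegrable (fun x:ℝ => Complex.exp ((-(t:ℂ)-n*Complex.I)*x))
      volume (-π) (-π+2*π) := by
    apply Continuous.intervalIntegrable
    fun_prop
  have h1re : ((t:ℂ) - (n:ℂ)*Complex.I).re ≠ 0 := by simpa using ht
  have h2re : (-(t:ℂ) - (n:ℂ)*Complex.I).re ≠ 0 := by simpa using ht
  rw [intervalIntegral.integral_div, intervalIntegral.integral_add i1 i2,
    key_int _ h1re, key_int _ h2re]
  -- now pure algebra
  set w := Complex.exp ((n:ℂ)*π*Complex.I) with hw_def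
  set u := Complex.exp ((t:ℂ)*(π:ℂ)) with hu_def
  have hww : w * w = 1 := exp_npiI_sq n
  have hwinv : w⁻¹ = w := inv_eq_of_mul_eq_one_right hww
  have e1 : Complex.exp (((t:ℂ)-n*Complex.I)*π) = u * w⁻¹ := by
    rw [hw_def, hu_def, ← Complex.exp_neg, ← Complex.exp_add]
    congr 1; ring
  have e1' : Complex.exp (-(((t:ℂ)-n*Complex.I)*π)) = u⁻¹ * w := by
    rw [hw_def, hu_def, ← Complex.exp_neg, ← Complex.exp_add]
    congr 1; ring
  have e2 : Complex.exp ((-(t:ℂ)-n*Complex.I)*π) = u⁻¹ * w⁻¹ := by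
    rw [hw_def, hu_def, ← Complex.exp_neg, ← Complex.exp_neg, ← Complex.exp_add]
    congr 1; ring
  have e2' : Complex.exp (-((-(t:ℂ)-n*Complex.I)*π)) = u * w := by
    rw [hw_def, hu_def, ← Complex.exp_add]
    congr 1; ring
  rw [e1, e1', e2, e2', hwinv]
  have hsinh : Complex.sinh ((π:ℂ)*(t:ℂ)) = (u - u⁻¹)/2 := by
    rw [Complex.sinh, hu_def, ← Complex.exp_neg]
    rw [show ((π:ℂ)*(t:ℂ)) = (t:ℂ)*(π:ℂ) by ring]
  rw [cf]
  push_cast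
  rw [hsinh, ← hw_def]
  have hu : u ≠ 0 := Complex.exp_ne_zero _
  have hw : w ≠ 0 := Complex.exp_ne_zero _
  have hpic : (π:ℂ) ≠ 0 := Complex.ofReal_ne_zero.mpr Real.pi_ne_zero
  have hnt : ((t:ℂ)^2 + (n:ℂ)^2) ≠ 0 := by
    have h0 : (0:ℝ) < t^2 + (n:ℝ)^2 := by positivity
    have := Complex.ofReal_ne_zero.mpr (ne_of_gt h0)
    push_cast at this
    exact this
  have hsm : ((1 / (-π + 2*π - -π) : ℝ) • (((u * w - u⁻¹ * w) / ((t:ℂ) - n*Complex.I) + (u⁻¹ * w - u * w) / (-(t:ℂ) - n*Complex.I)) / 2) : ℂ)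
      = ((1 / (2*(π:ℂ)))) * (((u * w - u⁻¹ * w) / ((t:ℂ) - n*Complex.I) + (u⁻¹ * w - u * w) / (-(t:ℂ) - n*Complex.I)) / 2) := by
    rw [Complex.real_smul]
    push_cast
    ring_nf
  rw [hsm]
  have hprod : ((t:ℂ)-(n:ℂ)*Complex.I) * (-(t:ℂ)-(n:ℂ)*Complex.I) = -((t:ℂ)^2+(n:ℂ)^2) := by
    linear_combination ((n:ℂ)^2) * Complex.I_sq
  rw [div_add_div _ _ hc1 hc2, hprod]
  have hnt' : -((t:ℂ)^2 + (n:ℂ)^2) ≠ 0 := neg_ne_zero.mpr hnt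
  have hN : (u*w - u⁻¹*w)*(-(t:ℂ)-(n:ℂ)*Complex.I) + ((t:ℂ)-(n:ℂ)*Complex.I)*(u⁻¹*w - u*w)
      = (u*w - u⁻¹*w)*(-2*(t:ℂ)) := by ring
  rw [hN]
  rw [show (u*w - u⁻¹*w)*(-2*(t:ℂ)) = -(2*(t:ℂ)*(u*w - u⁻¹*w)) by ring, neg_div_neg_eq]
  rw [inv_eq_one_div u]
  field_simp

lemma summable_base (t : ℝ) : Summable (fun n : ℕ => 1 / (t^2 + ((n:ℝ)+1)^2)) := by
  have h1 : Summable (fun n : ℕ => 1/((n:ℝ))^2) :=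
    Real.summable_one_div_nat_pow.mpr one_lt_two
  have h2 : Summable (fun n : ℕ => 1/((n:ℝ)+1)^2) := by
    have := (summable_nat_add_iff 1).mpr h1
    simpa using this
  refine h2.of_nonneg_of_le (fun n => by positivity) (fun n => ?_)
  apply one_div_le_one_div_of_le (by positivity)
  nlinarith [sq_nonneg t]

lemma summable_int (t : ℝ) (ht : t ≠ 0) : Summable (fun n : ℤ => 1 / (t^2 + (n:ℝ)^2)) := by
  apply Summable.of_nat_of_neg_add_one
  · have := (summable_nat_add_iff (f := fun n : ℕ => 1 / (t^2 + (n:ℝ)^2)) 1).mp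
      (by simpa using summable_base t)
    simpa using this
  · refine (summable_base t).congr (fun n => ?_)
    push_cast
    ring_nf

lemma summable_cf (t : ℝ) (ht : t ≠ 0) : Summable (fun n : ℤ => cf t n) := by
  apply Summable.of_norm
  have hnorm : ∀ n : ℤ, ‖cf t n‖ = |Real.sinh (π*t) * t| / (π * (t^2 + (n:ℝ)^2)) := by
    intro n
    rw [cf, norm_mul, Complex.norm_exp]
    have : ((n:ℂ)*π*Complex.I).re = 0 := by simp
    rw [this, Real.exp_zero, one_mul, Complex.norm_real, Real.norm_eq_abs, abs_div]
    congr 1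
    have h0 : (0:ℝ) < π * (t^2 + (n:ℝ)^2) := by positivity
    exact abs_of_pos h0
  simp only [hnorm]
  have := (summable_int t ht).mul_left (|Real.sinh (π*t) * t| / π)
  refine this.congr (fun n => ?_)
  have hpi := Real.pi_pos
  field_simp

end

open Real

/-- For `t ≠ 0`, `∑_{n=1}^∞ 1/(n² + t²) = -1/(2t²) + (π/(2t)) coth(πt)`,
where `coth x = (e^{2x} + 1)/(e^{2x} - 1)`. `HasSum` expresses both convergence and the value. -/
theorem stmt_1 (t : ℝ) (ht : t ≠ 0) :
    HasSum (fun n : ℕ => 1 / ((((n : ℝ) + 1)) ^ 2 + t ^ 2))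
      (-1 / (2 * t ^ 2) +
        (π / (2 * t)) * ((Real.exp (2 * (π * t)) + 1) / (Real.exp (2 * (π * t)) - 1))) := by
  have hpi := Real.pi_pos
  haveI : Fact (0 < 2*π) := ⟨by positivity⟩
  set g : ℝ → ℂ := fun x => (Real.cosh (t*x) : ℂ) with hg
  have hgc : Continuous g := by fun_prop
  have hends : g (-π) = g (-π + 2*π) := by
    simp only [hg]
    rw [show t * -π = -(t*π) by ring, Real.cosh_neg,
      show t * (-π + 2*π) = t*π by ring]
  set f : C(AddCircle (2*π), ℂ) := ⟨AddCircle.liftIco (2*π) (-π) g,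
    AddCircle.liftIco_continuous hends hgc.continuousOn⟩ with hf
  have hcoeff : ∀ n : ℤ, fourierCoeff (f : AddCircle (2*π) → ℂ) n = cf t n := by
    intro n
    have h1 := fourierCoeff_liftIco_eq (T := 2*π) (a := -π) g n
    have h2 := coeff_eq t ht n
    rw [show (fourierCoeff (f : AddCircle (2*π) → ℂ) n) =
      fourierCoeff (AddCircle.liftIco (2*π) (-π) g) n from rfl, h1]
    exact h2
  have hsum : Summable (fourierCoeff (f : AddCircle (2*π) → ℂ)) := by
    rw [show (fourierCoeff (f : AddCircle (2*π) → ℂ)) = fun n => cf t n from funext hcoeff]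
    exact summable_cf t ht
  set x₀ : AddCircle (2*π) := ((-π : ℝ) : AddCircle (2*π)) with hx₀def
  have HS := has_pointwise_sum_fourier_series_of_summable hsum x₀
  have hfx₀ : f x₀ = (Real.cosh (π*t) : ℂ) := by
    have hmem : (-π : ℝ) ∈ Set.Ico (-π) (-π + 2*π) := by constructor <;> linarith
    show AddCircle.liftIco (2*π) (-π) g _ = _
    rw [AddCircle.liftIco_coe_apply hmem]
    simp only [hg]
    rw [show t * -π = -(π*t) by ring, Real.cosh_neg]
  have hterm : ∀ n : ℤ, fourierCoeff (f : AddCircle (2*π) → ℂ) n • fourier n x₀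
      = ((Real.sinh (π*t) * t / (π * (t^2+(n:ℝ)^2)) : ℝ) : ℂ) := by
    intro n
    rw [hcoeff n, smul_eq_mul, hx₀def, fourier_coe_apply, cf]
    have hpc : (π:ℂ) ≠ 0 := Complex.ofReal_ne_zero.mpr Real.pi_ne_zero
    have hd : 2*(π:ℂ)*Complex.I*(n:ℂ)*((-π:ℝ):ℂ)/((2*π:ℝ):ℂ) = -((n:ℂ)*π*Complex.I) := by
      push_cast
      field_simp
    rw [hd, Complex.exp_neg]
    have hw : Complex.exp ((n:ℂ)*π*Complex.I) ≠ 0 := Complex.exp_ne_zero _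
    rw [mul_right_comm, mul_inv_cancel₀ hw, one_mul]
  rw [funext hterm, hfx₀] at HS
  rw [Complex.hasSum_ofReal] at HS
  -- HS : HasSum (fun n : ℤ => sinh(πt)*t/(π*(t²+n²))) (cosh (πt))
  have hs0 : Real.sinh (π*t) ≠ 0 := Real.sinh_ne_zero.mpr
    (mul_ne_zero Real.pi_ne_zero ht)
  have hst : Real.sinh (π*t) * t ≠ 0 := mul_ne_zero hs0 ht
  -- multiply by π / (sinh(πt) * t)
  have HS2 : HasSum (fun n : ℤ => 1/(t^2 + (n:ℝ)^2))
      (π * Real.cosh (π*t) / (Real.sinh (π*t) * t)) := by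
    have H := HS.mul_left (π / (Real.sinh (π*t) * t))
    have heq : (fun n : ℤ => π / (Real.sinh (π*t) * t)
        * (Real.sinh (π*t) * t / (π * (t^2 + (n:ℝ)^2)))) = fun n : ℤ => 1/(t^2 + (n:ℝ)^2) := by
      funext n
      have hx : (0:ℝ) < t^2 + (n:ℝ)^2 := by positivity
      field_simp
    rw [heq] at H
    rw [show π * Real.cosh (π*t) / (Real.sinh (π*t) * t)
      = π / (Real.sinh (π*t) * t) * Real.cosh (π*t) by ring]
    exact H
  -- fold ℤ to ℕ
  have HS3 := HS2.nat_add_neg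
  have heq2 : (fun n : ℕ => 1/(t^2 + ((n:ℤ):ℝ)^2) + 1/(t^2 + (((-n:ℤ)):ℝ)^2))
      = fun n : ℕ => 2 * (1/(t^2 + (n:ℝ)^2)) := by
    funext n
    push_cast
    ring
  rw [heq2] at HS3
  set A := π * Real.cosh (π*t) / (Real.sinh (π*t) * t) with hA
  have HS4 := (hasSum_nat_add_iff' (f := fun n : ℕ => 2 * (1/(t^2 + (n:ℝ)^2))) 1).mpr HS3
  have HS5 := HS4.div_const 2
  have heq3 : (fun n : ℕ => 2 * (1/(t^2 + (((n+1):ℕ):ℝ)^2)) / 2)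
      = fun n : ℕ => 1 / (((n:ℝ)+1)^2 + t^2) := by
    funext n
    push_cast
    ring
  rw [heq3] at HS5
  convert HS5 using 1
  · rfl
  -- value identity
  have hexp1 : Real.exp (2*(π*t)) - 1 ≠ 0 := by
    intro h
    have h2 : Real.exp (2*(π*t)) = 1 := by linarith
    rw [Real.exp_eq_one_iff] at h2
    have : π * t ≠ 0 := mul_ne_zero Real.pi_ne_zero ht
    apply this
    linarith
  have hcoth : Real.cosh (π*t) / Real.sinh (π*t)
      = (Real.exp (2*(π*t)) + 1)/(Real.exp (2*(π*t)) - 1) := by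
    have hse : Real.exp (2*(π*t)) - 1
        = Real.exp (π*t) * Real.exp (π*t) - 1 := by
      rw [← Real.exp_add]; ring_nf
    rw [Real.cosh_eq, Real.sinh_eq, Real.exp_neg,
      show (2:ℝ)*(π*t) = π*t + π*t by ring, Real.exp_add]
    have h1 : Real.exp (π*t) ≠ 0 := (Real.exp_pos _).ne'
    have h2 : Real.exp (π*t) * Real.exp (π*t) - 1 ≠ 0 := by
      rw [← Real.exp_add] at *
      intro h
      apply hexp1
      rw [show (2:ℝ)*(π*t) = π*t + π*t by ring]
      linarith [h]
    have h3 : Real.exp (π*t) - (Real.exp (π*t))⁻¹ ≠ 0 := by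
      intro h
      apply h2
      have h5 : Real.exp (π*t) = (Real.exp (π*t))⁻¹ := by linarith
      have h4 : Real.exp (π*t) * Real.exp (π*t) = 1 := by
        nth_rewrite 2 [h5]
        field_simp
      linarith
    field_simp
  rw [show (Real.exp (2*(π*t)) + 1)/(Real.exp (2*(π*t)) - 1)
      = Real.cosh (π*t) / Real.sinh (π*t) from hcoth.symm, hA]
  have hsq : Finset.range 1 = {0} := rfl
  simp only [hsq, Finset.sum_singleton]
  push_cast
  field_simp
  ring
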